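/- Assume C has full span and let v = Σ_{S∈C} α_S·w_S be the unique expansion of v : C → ℝ in the MM-basis. Define the game ṽ : 𝒩 → ℝ on all nonempty subsets of N by ṽ = Σ_{S∈C} α_S·w̃_S, where w̃_S(T) = 1 if S ∩ T ≠ ∅ and 0 if S ∩ T = ∅, for all nonempty T ⊆ N. Then the equitable solution of v equals the Shapley value of ṽ: χ(v) = φ(ṽ) in ℝ^N. -/
import Mathlib


open Finset
open scoped Classical

/-! Common definitions: games on a collection `C` of coalitions of a finite
player set `N`, MM-games, full span, assignments, representations, the
equitable solution, and the Shapley value. -/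

/-- The MM-game `w_S`, as a vector in `ℝ^C`:
`w_S(T) = 1` if `S` meets `T` (i.e. `S ∩ T ≠ ∅`) and `0` if `S` misses `T`. -/
noncomputable def mmGame {N : Type} [DecidableEq N] (C : Finset (Finset N))
    (S : Finset N) : {T : Finset N // T ∈ C} → ℝ :=
  fun T => if (S ∩ T.1).Nonempty then 1 else 0

/-- `C` has full span: the family of MM-games `{w_S}_{S ∈ C}` is a basis of `ℝ^C`,
i.e. it is linearly independent and spans `ℝ^C`. -/
def FullSpan {N : Type} [DecidableEq N] (C : Finset (Finset N)) : Prop :=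
  LinearIndependent ℝ (fun S : {S : Finset N // S ∈ C} => mmGame C S.1) ∧
  Submodule.span ℝ (Set.range fun S : {S : Finset N // S ∈ C} => mmGame C S.1) = ⊤

/-- The full user-set `ψ⁻¹(k) = {n ∈ N : k ∈ ψ(n)}` of facility `k`. -/
noncomputable def userSet {N K : Type} [Fintype N] (ψ : N → Finset K) (k : K) :
    Finset N :=
  Finset.univ.filter fun n => k ∈ ψ n

/-- `(ψ, γ)` is a representation of the game `v : C → ℝ`.  The set of facilities
is `K = ψ(N) = ⋃_{n ∈ N} ψ(n)` (every facility has a nonempty full user-set);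
we require `ψ⁻¹(k) ∈ C` for every facility `k`, and
`v(S) = ∑_{k ∈ ψ(S)} γ(k)` for every `S ∈ C`, where `ψ(S) = ⋃_{n ∈ S} ψ(n)`. -/
def IsRep {N : Type} [Fintype N] [DecidableEq N] (C : Finset (Finset N))
    (v : {T : Finset N // T ∈ C} → ℝ) {K : Type} (ψ : N → Finset K)
    (γ : K → ℝ) : Prop :=
  (∀ k ∈ Finset.univ.biUnion ψ, userSet ψ k ∈ C) ∧
  ∀ T : {T : Finset N // T ∈ C}, v T = ∑ k ∈ T.1.biUnion ψ, γ k

/-- The equitable solution `τ(ψ, γ) ∈ ℝ^N`: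
`τ_n(ψ,γ) = ∑_{k ∈ ψ(n)} γ(k)/|ψ⁻¹(k)|`. -/
noncomputable def tau {N K : Type} [Fintype N] (ψ : N → Finset K) (γ : K → ℝ)
    (n : N) : ℝ :=
  ∑ k ∈ ψ n, γ k / ((userSet ψ k).card : ℝ)

/-- The Shapley value `φ_n(v)` of a game on all coalitions of `N`
(`v ∅` is understood to be `0`):
`φ_n(v) = ∑_{S ⊆ N∖{n}} (|S|!(|N|−1−|S|)!/|N|!)·(v(S∪{n}) − v(S))`. -/
noncomputable def shapley {N : Type} [Fintype N] [DecidableEq N]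
    (v : Finset N → ℝ) (n : N) : ℝ :=
  ∑ S ∈ (Finset.univ.erase n).powerset,
    ((S.card.factorial : ℝ) * ((Fintype.card N - 1 - S.card).factorial : ℝ) /
      ((Fintype.card N).factorial : ℝ)) * (v (insert n S) - v S)

/-- `C` is a semi-algebra: `N ∈ C`, and `N∖S ∈ C` for every `S ∈ C` with `S ≠ N`. -/
def IsSemiAlgebra {N : Type} [Fintype N] [DecidableEq N]
    (C : Finset (Finset N)) : Prop :=
  Finset.univ ∈ C ∧ ∀ S ∈ C, S ≠ Finset.univ → Finset.univ \ S ∈ C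

/-- `C` is hierarchical: its elements can be arranged in a sequence
`S_1, …, S_l` such that for every `k = 2, …, l`, (i) `S_1` meets `S_k`, and
(ii) some `T ∈ C` misses `S_k` and meets each of `S_1, …, S_{k−1}`.
(Indices are `0, …, l-1` here, with `S_1` the element of index `0`.) -/
def IsHierarchy {N : Type} [DecidableEq N] (C : Finset (Finset N)) : Prop :=
  ∃ (l : ℕ) (hl : 0 < l) (S : Fin l → Finset N),
    Function.Injective S ∧ (∀ k, S k ∈ C) ∧ (∀ T ∈ C, ∃ k, S k = T) ∧
    ∀ k : Fin l, 0 < (k : ℕ) →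
      ((S ⟨0, hl⟩ ∩ S k).Nonempty ∧
       ∃ T ∈ C, T ∩ S k = ∅ ∧
         ∀ j : Fin l, (j : ℕ) < (k : ℕ) → (T ∩ S j).Nonempty)

/-- Players `i` and `j` are symmetric in the game `v : C → ℝ`. -/
def SymmetricPlayers {N : Type} [DecidableEq N] (C : Finset (Finset N))
    (v : {T : Finset N // T ∈ C} → ℝ) (i j : N) : Prop :=
  ∀ T : Finset N, i ∉ T → j ∉ T →
    (insert i T ∈ C ↔ insert j T ∈ C) ∧
    ∀ (hi : insert i T ∈ C) (hj : insert j T ∈ C),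
      v ⟨insert i T, hi⟩ = v ⟨insert j T, hj⟩

/-- Player `i` is a dummy in the game `v : C → ℝ`. -/
def DummyPlayer {N : Type} [DecidableEq N] (C : Finset (Finset N))
    (v : {T : Finset N // T ∈ C} → ℝ) (i : N) : Prop :=
  (∀ h : ({i} : Finset N) ∈ C, v ⟨{i}, h⟩ = 0) ∧
  ∀ T : Finset N, T.Nonempty → i ∉ T →
    (insert i T ∈ C ↔ T ∈ C) ∧
    ∀ (hiT : insert i T ∈ C) (hT : T ∈ C), v ⟨insert i T, hiT⟩ = v ⟨T, hT⟩

private lemma A_succ (s m : ℕ) (hs : 0 < s) :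
    ∑ t ∈ Finset.range (m+2), (m+1).choose t * t.factorial * (m+1+s-1-t).factorial
      = (m+s+1) * ∑ t ∈ Finset.range (m+1), m.choose t * t.factorial * (m+s-1-t).factorial := by
  have key : ∑ t ∈ Finset.range (m+1), m.choose (t+1) * (t+1).factorial * (m+s-1-t).factorial
      + (m+s).factorial
      = ∑ t ∈ Finset.range (m+1), m.choose t * t.factorial * (m+s-t).factorial := by
    have h := Finset.sum_range_succ' (fun t => m.choose t * t.factorial * (m+s-t).factorial) (m+1)
    rw [Finset.sum_range_succ (fun t => m.choose t * t.factorial * (m+s-t).factorial) (m+1)] at h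
    simp only [Nat.choose_eq_zero_of_lt (Nat.lt_succ_self m), zero_mul, add_zero,
      Nat.choose_zero_right, Nat.factorial_zero, one_mul, Nat.sub_zero, mul_one] at h
    rw [h]
    congr 1
    refine Finset.sum_congr rfl fun t ht => ?_
    rw [show m+s-(t+1) = m+s-1-t from by omega]
  have harg : ∀ t ∈ Finset.range (m+2),
      (m+1).choose t * t.factorial * (m+1+s-1-t).factorial
        = (m+1).choose t * t.factorial * (m+s-t).factorial := by
    intro t ht
    rw [show m+1+s-1-t = m+s-t from by omega]
  rw [Finset.sum_congr rfl harg,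
    Finset.sum_range_succ' (fun t => (m+1).choose t * t.factorial * (m+s-t).factorial) (m+1)]
  simp only [Nat.choose_zero_right, Nat.factorial_zero, one_mul, Nat.sub_zero, mul_one]
  have hterm : ∀ t ∈ Finset.range (m+1),
      (m+1).choose (t+1) * (t+1).factorial * (m+s-(t+1)).factorial
        = m.choose t * (t+1).factorial * (m+s-1-t).factorial
          + m.choose (t+1) * (t+1).factorial * (m+s-1-t).factorial := by
    intro t ht
    rw [show m+s-(t+1) = m+s-1-t from by omega, Nat.choose_succ_succ', Nat.add_mul, Nat.add_mul]
  rw [Finset.sum_congr rfl hterm, Finset.sum_add_distrib, add_assoc, key, Finset.mul_sum,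
    ← Finset.sum_add_distrib]
  refine Finset.sum_congr rfl fun t ht => ?_
  rw [Finset.mem_range] at ht
  have hd : m+s-t = (m+s-1-t)+1 := by omega
  have hc : m+s+1 = (t+1) + ((m+s-1-t)+1) := by omega
  rw [hd, Nat.factorial_succ t, Nat.factorial_succ (m+s-1-t), hc]
  ring

private lemma A_mul (s : ℕ) (hs : 0 < s) (m : ℕ) :
    (∑ t ∈ Finset.range (m+1), m.choose t * t.factorial * (m+s-1-t).factorial) * s
      = (m+s).factorial := by
  induction m with
  | zero =>
    obtain ⟨s', rfl⟩ : ∃ s', s = s'+1 := ⟨s-1, by omega⟩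
    simp [Nat.factorial_succ, mul_comm]
  | succ m ih =>
    have := A_succ s m hs
    rw [show m+1+1 = m+2 from rfl, this, mul_assoc, ih,
      show m+1+s = (m+s)+1 from by omega, Nat.factorial_succ]

private lemma shapley_mm {N : Type} [Fintype N] [DecidableEq N] (S : Finset N)
    (hS : S.Nonempty) (n : N) :
    shapley (fun T => if (S ∩ T).Nonempty then (1:ℝ) else 0) n
      = if n ∈ S then 1 / (S.card : ℝ) else 0 := by
  by_cases hn : n ∈ S
  · rw [if_pos hn]
    unfold shapley
    have h1 : ∀ T ∈ (Finset.univ.erase n).powerset,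
        ((T.card.factorial : ℝ) * ((Fintype.card N - 1 - T.card).factorial : ℝ) /
          ((Fintype.card N).factorial : ℝ)) *
          ((if (S ∩ insert n T).Nonempty then (1:ℝ) else 0) -
           (if (S ∩ T).Nonempty then (1:ℝ) else 0))
        = if ¬ (S ∩ T).Nonempty then
            ((T.card.factorial : ℝ) * ((Fintype.card N - 1 - T.card).factorial : ℝ) /
              ((Fintype.card N).factorial : ℝ)) else 0 := by
      intro T hT
      have hne : (S ∩ insert n T).Nonempty :=
        ⟨n, Finset.mem_inter.2 ⟨hn, Finset.mem_insert_self n T⟩⟩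
      rw [if_pos hne]
      by_cases h : (S ∩ T).Nonempty <;> simp [h]
    rw [Finset.sum_congr rfl h1, Finset.sum_ite, Finset.sum_const, smul_zero, add_zero]
    have hset : (Finset.univ.erase n).powerset.filter (fun T => ¬ (S ∩ T).Nonempty)
        = (Finset.univ \ S).powerset := by
      ext T
      simp only [Finset.mem_filter, Finset.mem_powerset, Finset.subset_erase,
        Finset.subset_sdiff, Finset.not_nonempty_iff_eq_empty,
        ← Finset.disjoint_iff_inter_eq_empty, Finset.subset_univ, true_and]
      constructor
      · rintro ⟨hnT, h⟩; exact h.symm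
      · intro h; exact ⟨fun hnT => (Finset.disjoint_left.1 h.symm hn hnT), h.symm⟩
    rw [hset, Finset.sum_powerset]
    have hcard : (Finset.univ \ S).card = Fintype.card N - S.card := by
      rw [Finset.card_sdiff_of_subset (Finset.subset_univ S), Finset.card_univ]
    set m := Fintype.card N - S.card with hm
    have hms : m + S.card = Fintype.card N := by
      have := Finset.card_le_card (Finset.subset_univ S)
      rw [Finset.card_univ] at this
      omega
    have h2 : ∀ j ∈ Finset.range (m+1),
        ∑ T ∈ Finset.powersetCard j (Finset.univ \ S),
          ((T.card.factorial : ℝ) * ((Fintype.card N - 1 - T.card).factorial : ℝ) /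
            ((Fintype.card N).factorial : ℝ))
        = ((m.choose j * j.factorial * (m + S.card - 1 - j).factorial : ℕ) : ℝ) /
            ((Fintype.card N).factorial : ℝ) := by
      intro j hj
      have hTc : ∀ T ∈ Finset.powersetCard j (Finset.univ \ S),
          ((T.card.factorial : ℝ) * ((Fintype.card N - 1 - T.card).factorial : ℝ) /
            ((Fintype.card N).factorial : ℝ))
          = ((j.factorial : ℝ) * ((Fintype.card N - 1 - j).factorial : ℝ) /
            ((Fintype.card N).factorial : ℝ)) := by
        intro T hT
        rw [(Finset.mem_powersetCard.1 hT).2]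
      rw [Finset.sum_congr rfl hTc, Finset.sum_const, Finset.card_powersetCard, hcard,
        hms, nsmul_eq_mul]
      push_cast
      ring
    rw [hcard, Finset.sum_congr rfl h2, ← Finset.sum_div, ← Nat.cast_sum]
    have hA := A_mul S.card (Finset.card_pos.2 hS) m
    have hfac : ((Fintype.card N).factorial : ℝ) ≠ 0 := by positivity
    have hsc : (S.card : ℝ) ≠ 0 := by
      simpa using Finset.card_pos.2 hS |>.ne'
    rw [div_eq_div_iff hfac hsc, one_mul, ← Nat.cast_mul, hA, hms]
  · rw [if_neg hn]
    unfold shapley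
    refine Finset.sum_eq_zero fun T hT => ?_
    simp only [Finset.inter_insert_of_notMem hn]
    ring

private lemma shapley_sum {N ι : Type} [Fintype N] [DecidableEq N] [Fintype ι]
    (α : ι → ℝ) (w : ι → Finset N → ℝ) (n : N) :
    shapley (fun T => ∑ i, α i * w i T) n = ∑ i, α i * shapley (w i) n := by
  unfold shapley
  simp only [← Finset.sum_sub_distrib, Finset.mul_sum]
  rw [Finset.sum_comm]
  refine Finset.sum_congr rfl fun i _ => ?_
  exact Finset.sum_congr rfl fun T _ => by ring

/-- If `C` has full span and `v = Σ_{S∈C} α_S • w_S` is the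
expansion of `v : C → ℝ` in the MM-basis, then the equitable solution of `v`
(the common value of `τ(ψ, γ)` over representations `(ψ, γ)` of `v`) equals
the Shapley value of the game `ṽ = Σ_{S∈C} α_S • w̃_S` on all nonempty
subsets of `N`, where `w̃_S(T) = 1` if `S ∩ T ≠ ∅` and `0` otherwise. -/
theorem equitable_eq_shapley_of_extension {N : Type} [Fintype N]
    [DecidableEq N] [Nonempty N] (C : Finset (Finset N)) (hCne : C.Nonempty)
    (hmem : ∀ S ∈ C, S.Nonempty) (hcover : ∀ n : N, ∃ S ∈ C, n ∈ S)
    (hfs : FullSpan C) (v : {T : Finset N // T ∈ C} → ℝ)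
    (α : {S : Finset N // S ∈ C} → ℝ)
    (hv : v = ∑ S : {S : Finset N // S ∈ C}, α S • mmGame C S.1)
    {K : Type} (ψ : N → Finset K) (γ : K → ℝ) (hrep : IsRep C v ψ γ) :
    ∀ n : N, tau ψ γ n =
      shapley (fun T : Finset N => ∑ S : {S : Finset N // S ∈ C},
        α S * (if (S.1 ∩ T).Nonempty then 1 else 0)) n := by
  classical
  set 𝒦 : Finset K := Finset.univ.biUnion ψ with h𝒦
  set g : K → {S : Finset N // S ∈ C} := fun k =>
    if h : userSet ψ k ∈ C then ⟨userSet ψ k, h⟩ else ⟨hCne.choose, hCne.choose_spec⟩ with hg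
  have hfilt : ∀ S : {S : Finset N // S ∈ C},
      𝒦.filter (fun k => g k = S) = 𝒦.filter (fun k => userSet ψ k = S.1) := by
    intro S
    refine Finset.filter_congr fun k hk => ?_
    have h := hrep.1 k hk
    simp [hg, dif_pos h, Subtype.ext_iff]
  have hfib : ∀ f : K → ℝ,
      ∑ k ∈ 𝒦, f k = ∑ S : {S : Finset N // S ∈ C},
        ∑ k ∈ 𝒦.filter (fun k => userSet ψ k = S.1), f k := by
    intro f
    rw [← Finset.sum_fiberwise 𝒦 g f]
    exact Finset.sum_congr rfl fun S _ => by rw [hfilt S]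
  set β : {S : Finset N // S ∈ C} → ℝ :=
    fun S => ∑ k ∈ 𝒦.filter (fun k => userSet ψ k = S.1), γ k with hβ
  have hrepEq : ∀ T : {T : Finset N // T ∈ C},
      v T = ∑ k ∈ 𝒦, (if (userSet ψ k ∩ T.1).Nonempty then γ k else 0) := by
    intro T
    rw [hrep.2 T, ← Finset.sum_filter]
    congr 1
    ext k
    simp only [Finset.mem_biUnion, Finset.mem_filter, Finset.mem_univ, true_and, h𝒦,
      userSet, Finset.Nonempty, Finset.mem_inter]
    constructor
    · rintro ⟨a, ha, hk⟩
      exact ⟨⟨a, hk⟩, ⟨a, by simp [hk, ha]⟩⟩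
    · rintro ⟨-, a, ha⟩
      exact ⟨a, ha.2, ha.1⟩
  have hβv : (∑ S : {S : Finset N // S ∈ C}, β S • mmGame C S.1) = v := by
    funext T
    rw [Finset.sum_apply]
    simp only [Pi.smul_apply, smul_eq_mul, mmGame]
    rw [hrepEq T, hfib (fun k => if (userSet ψ k ∩ T.1).Nonempty then γ k else 0)]
    refine Finset.sum_congr rfl fun S _ => ?_
    rw [hβ, Finset.sum_mul]
    refine Finset.sum_congr rfl fun k hk => ?_
    have hk' : userSet ψ k = S.1 := (Finset.mem_filter.1 hk).2
    rw [hk']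
    by_cases h : (S.1 ∩ T.1).Nonempty <;> simp [h]
  have h0 : ∑ S : {S : Finset N // S ∈ C}, (α S - β S) • mmGame C S.1 = 0 := by
    simp only [sub_smul, Finset.sum_sub_distrib]
    rw [← hv, hβv, sub_self]
  have hαβ : ∀ S, α S = β S := by
    intro S
    have := Fintype.linearIndependent_iff.1 hfs.1 (fun S => α S - β S) h0 S
    linarith
  intro n
  have hR : shapley (fun T : Finset N => ∑ S : {S : Finset N // S ∈ C},
      α S * (if (S.1 ∩ T).Nonempty then 1 else 0)) n
      = ∑ S : {S : Finset N // S ∈ C}, α S * (if n ∈ S.1 then 1 / (S.1.card : ℝ) else 0) := by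
    refine (shapley_sum α (fun S T => if (S.1 ∩ T).Nonempty then (1:ℝ) else 0) n).trans ?_
    exact Finset.sum_congr rfl fun S _ => by rw [shapley_mm S.1 (hmem S.1 S.2) n]
  rw [hR]
  have hψn : ψ n = 𝒦.filter (fun k => n ∈ userSet ψ k) := by
    ext k
    simp only [Finset.mem_filter, h𝒦, Finset.mem_biUnion, Finset.mem_univ, true_and, userSet]
    constructor
    · intro h; exact ⟨⟨n, h⟩, by simp [h]⟩
    · rintro ⟨-, h⟩
      exact h
  unfold tau
  rw [hψn, Finset.sum_filter,
    hfib (fun k => if n ∈ userSet ψ k then γ k / ((userSet ψ k).card : ℝ) else 0)]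
  refine Finset.sum_congr rfl fun S _ => ?_
  rw [hαβ S, hβ, Finset.sum_mul]
  refine Finset.sum_congr rfl fun k hk => ?_
  have hk' : userSet ψ k = S.1 := (Finset.mem_filter.1 hk).2
  rw [hk']
  by_cases h : n ∈ S.1
  · rw [if_pos h, if_pos h]; ring
  · simp [h]
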